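/- Let (D, †) be a semisimple k-algebra with involution and V a left D-module. Then the map ψ ↦ Trd_{D/k} ∘ ψ is a bijection between the set of (D,†)-skew-Hermitian forms on V and the set of (D,†)-compatible skew-symmetric k-bilinear forms on V. -/
import Mathlib

section

variable {k : Type*} [Field k] {D : Type*} [Ring D] [Algebra k D] [StarRing D]
variable {V : Type*} [AddCommGroup V] [Module k V] [Module D V]

/-- A `(D, †)`-skew-Hermitian form on a left `D`-module `V`. -/
def IsSkewHermitianForm (ψ : V → V → D) : Prop :=
  (∀ x x' y, ψ (x + x') y = ψ x y + ψ x' y) ∧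
  (∀ x y y', ψ x (y + y') = ψ x y + ψ x y') ∧
  (∀ (a b : D) (x y : V), ψ (a • x) (b • y) = a * ψ x y * star b) ∧
  (∀ x y, ψ y x = - star (ψ x y))

/-- A `(D, †)`-compatible skew-symmetric `k`-bilinear form on `V`. -/
def IsCompatSkewSymmForm (φ : V → V → k) : Prop :=
  (∀ x x' y, φ (x + x') y = φ x y + φ x' y) ∧
  (∀ x y y', φ x (y + y') = φ x y + φ x y') ∧
  (∀ (c : k) (x y : V), φ (c • x) y = c * φ x y) ∧
  (∀ x y, φ y x = - φ x y) ∧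
  (∀ (a : D) (x y : V), φ (a • x) y = φ x (star a • y))

end

theorem stmt19 {k : Type*} [Field k] {D : Type*} [Ring D] [Algebra k D]
    [StarRing D] [FiniteDimensional k D] [IsSemisimpleRing D]
    {V : Type*} [AddCommGroup V] [Module k V] [Module D V] [IsScalarTower k D V]
    (trd : D →ₗ[k] k)
    (htrace : ∀ a b : D, trd (a * b) = trd (b * a))
    (hstar : ∀ a : D, trd (star a) = trd a)
    (hnd : ∀ a : D, a ≠ 0 → ∃ b : D, trd (a * b) ≠ 0) :
    (∀ ψ : V → V → D, IsSkewHermitianForm ψ →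
      IsCompatSkewSymmForm (k := k) (D := D) fun x y => trd (ψ x y)) ∧
    (∀ φ : V → V → k, IsCompatSkewSymmForm (k := k) (D := D) φ →
      ∃! ψ : V → V → D, IsSkewHermitianForm ψ ∧ ∀ x y, trd (ψ x y) = φ x y) := by
  -- the trace pairing as a map to the dual
  set B : D →ₗ[k] Module.Dual k D :=
    { toFun := fun d =>
        { toFun := fun c => trd (d * c)
          map_add' := fun c c' => by simp [mul_add]
          map_smul' := fun s c => by simp [mul_smul_comm] }
      map_add' := fun d d' => by ext c; simp [add_mul]
      map_smul' := fun s d => by ext c; simp [smul_mul_assoc] } with hB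
  have hBapp : ∀ d c, B d c = trd (d * c) := fun _ _ => rfl
  have hBinj : Function.Injective B := by
    rw [← LinearMap.ker_eq_bot, LinearMap.ker_eq_bot']
    intro d hd
    by_contra h
    obtain ⟨b, hb⟩ := hnd d h
    exact hb (by simpa [hBapp] using congrFun (congrArg DFunLike.coe hd) b)
  have hBsurj : Function.Surjective B :=
    (LinearMap.injective_iff_surjective_of_finrank_eq_finrank
      Subspace.dual_finrank_eq.symm).mp hBinj
  have hext : ∀ d d' : D, (∀ c, trd (d * c) = trd (d' * c)) → d = d' := by
    intro d d' h
    exact hBinj (by ext c; simp [hBapp, h c])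
  constructor
  · rintro ψ ⟨h1, h2, h3, h4⟩
    refine ⟨fun x x' y => ?_, fun x y y' => ?_, fun c x y => ?_, fun x y => ?_,
            fun a x y => ?_⟩
    · show trd (ψ (x + x') y) = trd (ψ x y) + trd (ψ x' y)
      rw [h1, map_add]
    · show trd (ψ x (y + y')) = trd (ψ x y) + trd (ψ x y')
      rw [h2, map_add]
    · show trd (ψ (c • x) y) = c * trd (ψ x y)
      have hx : (c • x : V) = (algebraMap k D c) • x := (algebraMap_smul D c x).symm
      have : ψ ((algebraMap k D c) • x) ((1 : D) • y)
          = algebraMap k D c * ψ x y * star (1 : D) := h3 _ _ _ _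
      rw [one_smul, star_one, mul_one] at this
      rw [hx, this, ← Algebra.smul_def, map_smul, smul_eq_mul]
    · show trd (ψ y x) = -trd (ψ x y)
      rw [h4, map_neg, hstar]
    · show trd (ψ (a • x) y) = trd (ψ x (star a • y))
      have ha : ψ (a • x) y = a * ψ x y := by
        have := h3 a 1 x y
        rwa [one_smul, star_one, mul_one] at this
      have hb : ψ x (star a • y) = ψ x y * a := by
        have := h3 1 (star a) x y
        rwa [one_smul, one_mul, star_star] at this
      rw [ha, hb, htrace]
  · rintro φ ⟨h1, h2, h3, h4, h5⟩
    have h5' : ∀ (b : D) (x y : V), φ x (b • y) = φ (star b • x) y := by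
      intro b x y
      rw [h5, star_star]
    have hψ : ∀ x y : V, ∃ d : D, ∀ c : D, trd (d * c) = φ (c • x) y := by
      intro x y
      obtain ⟨d, hd⟩ := hBsurj
        { toFun := fun c => φ (c • x) y
          map_add' := fun c c' => by
            show φ ((c + c') • x) y = φ (c • x) y + φ (c' • x) y
            rw [add_smul, h1]
          map_smul' := fun s c => by
            show φ ((s • c) • x) y = s • φ (c • x) y
            rw [smul_assoc, h3, smul_eq_mul] }
      refine ⟨d, fun c => ?_⟩
      have := congrFun (congrArg DFunLike.coe hd) c
      simpa [hBapp] using this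
    choose ψ hψ using hψ
    have key : ∀ (x y : V) (b c : D), trd (ψ x y * (star b * c)) = φ (c • x) (b • y) := by
      intro x y b c
      rw [h5' b, ← mul_smul, hψ]
    have hstarmul : ∀ (d c : D), trd (star d * c) = trd (d * star c) := by
      intro d c
      rw [← hstar (d * star c), star_mul, star_star, htrace]
    refine ⟨ψ, ⟨⟨?_, ?_, ?_, ?_⟩, ?_⟩, ?_⟩
    · intro x x' y
      refine hext _ _ fun c => ?_
      rw [hψ, smul_add, h1, ← hψ, ← hψ, ← map_add, ← add_mul]
    · intro x y y'
      refine hext _ _ fun c => ?_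
      rw [hψ, h2, add_mul, map_add, hψ, hψ]
    · intro a b x y
      refine hext _ _ fun c => ?_
      calc trd (ψ (a • x) (b • y) * c) = φ (c • a • x) (b • y) := hψ _ _ _
        _ = φ ((c * a) • x) (b • y) := by rw [smul_smul]
        _ = trd (ψ x y * (star b * (c * a))) := (key x y b (c * a)).symm
        _ = trd (ψ x y * (star b * c) * a) := by rw [mul_assoc, mul_assoc]
        _ = trd (a * (ψ x y * (star b * c))) := htrace _ _
        _ = trd (a * ψ x y * star b * c) := by rw [mul_assoc, mul_assoc]
    · intro x y
      refine hext _ _ fun c => ?_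
      calc trd (ψ y x * c) = φ (c • y) x := hψ _ _ _
        _ = -φ x (c • y) := h4 x (c • y)
        _ = -φ (star c • x) y := by rw [h5']
        _ = -trd (ψ x y * star c) := by rw [hψ]
        _ = trd (-star (ψ x y) * c) := by rw [neg_mul, map_neg, hstarmul]
    · intro x y
      have := hψ x y 1
      rwa [mul_one, one_smul] at this
    · rintro ψ' ⟨⟨g1, g2, g3, g4⟩, gtr⟩
      funext x y
      refine hext _ _ fun c => ?_
      have hc : ψ' (c • x) y = c * ψ' x y := by
        have := g3 c 1 x y
        rwa [one_smul, star_one, mul_one] at this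
      calc trd (ψ' x y * c) = trd (c * ψ' x y) := htrace _ _
        _ = trd (ψ' (c • x) y) := by rw [hc]
        _ = φ (c • x) y := gtr _ _
        _ = trd (ψ x y * c) := (hψ _ _ _).symm
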